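/- Let k be a field of characteristic zero, let n ≥ 1, and let A be an integral domain containing k that is a unique factorization domain, whose fraction field has transcendence degree n+1 over k, and with A* = k*. Let D_1, …, D_n be pairwise commuting locally nilpotent k-derivations of A, linearly independent over A, and let f ∈ A \ k with A^{D_1,…,D_n} = k[f]. Suppose E and E' are k-derivations of A such that there exist nonzero polynomials q, q' ∈ k[X] and polynomials g_1, …, g_n, g'_1, …, g'_n ∈ k[X] with q(f)·E(x) = Σ_i g_i(f)·D_i(x) and q'(f)·E'(x) = Σ_i g'_i(f)·D_i(x) for all x ∈ A. Then E is a locally nilpotent derivation of A, and E ∘ E' = E' ∘ E. -/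

import Mathlib

section aux
variable {k A : Type*} [CommRing k] [CommRing A] [Algebra k A]

theorem ptLN_pow_ge {T : Module.End k A} {x : A} {m : ℕ} (h : (T ^ m) x = 0)
    {j : ℕ} (hj : m ≤ j) : (T ^ j) x = 0 := by
  obtain ⟨d, rfl⟩ := Nat.exists_eq_add_of_le hj
  rw [add_comm, pow_add, Module.End.mul_apply, h, map_zero]

theorem ptLN_add {S T : Module.End k A} (hST : Commute S T)
    (hS : ∀ x : A, ∃ m, (S ^ m) x = 0) (hT : ∀ x : A, ∃ m, (T ^ m) x = 0) :
    ∀ x : A, ∃ m, ((S + T) ^ m) x = 0 := by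
  intro x
  obtain ⟨mT, hmT⟩ := hT x
  choose ms hms using fun i : ℕ => hS ((T ^ i) x)
  set mS := (Finset.range mT).sup ms with hmS
  refine ⟨mS + mT, ?_⟩
  rw [hST.add_pow]
  rw [LinearMap.sum_apply]
  refine Finset.sum_eq_zero fun i hi => ?_
  rw [Module.End.mul_apply, Module.End.mul_apply]
  have hc : ((mS + mT).choose i : Module.End k A) x = (mS + mT).choose i • x := by
    simp [Module.End.natCast_apply]
  rw [hc, map_nsmul, map_nsmul]
  rcases le_or_gt mT (mS + mT - i) with h | h
  · rw [ptLN_pow_ge hmT h, map_zero, smul_zero]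
  · have hi' : i ≤ mS + mT := Nat.lt_succ_iff.mp (Finset.mem_range.mp hi)
    have hms_le : ms (mS + mT - i) ≤ mS := Finset.le_sup (Finset.mem_range.mpr h)
    have h2 : (S ^ i) ((T ^ (mS + mT - i)) x) = 0 :=
      ptLN_pow_ge (hms (mS + mT - i)) (le_trans hms_le (by omega))
    rw [h2, smul_zero]

theorem ptLN_sum {ι : Type*} (s : Finset ι) (M : ι → Module.End k A)
    (hco : ∀ i j, Commute (M i) (M j))
    (h : ∀ i, ∀ x : A, ∃ m, (M i ^ m) x = 0) :
    ∀ x : A, ∃ m, ((∑ i ∈ s, M i) ^ m) x = 0 := by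
  classical
  induction s using Finset.cons_induction with
  | empty => intro x; exact ⟨1, by simp⟩
  | cons a s ha ih =>
      rw [Finset.sum_cons]
      exact ptLN_add (Commute.sum_right _ _ _ (fun j _ => hco a j)) (h a) ih
end aux

/-- A derivation is locally nilpotent if every element is killed by some iterate. -/
def Derivation.IsLocallyNilpotent {k A : Type*} [CommRing k] [CommRing A] [Algebra k A]
    (D : Derivation k A A) : Prop :=
  ∀ a : A, ∃ m : ℕ, 1 ≤ m ∧ (fun x => D x)^[m] a = 0

theorem statement11 (k : Type*) [Field k] [CharZero k] (n : ℕ) (hn : 1 ≤ n)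
    (A : Type*) [CommRing A] [IsDomain A] [UniqueFactorizationMonoid A] [Algebra k A]
    (htrdeg : ∃ b : Fin (n + 1) → FractionRing A, IsTranscendenceBasis k b)
    (hunits : ∀ a : A, IsUnit a → ∃ c : k, algebraMap k A c = a)
    (D : Fin n → Derivation k A A)
    (hLN : ∀ i, (D i).IsLocallyNilpotent)
    (hcomm : ∀ i j, ∀ x : A, D i (D j x) = D j (D i x))
    (hindep : ∀ a : Fin n → A,
      (∀ x : A, ∑ i, a i * D i x = 0) → ∀ i, a i = 0)
    (f : A) (hf : f ∉ (algebraMap k A).range)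
    (hker : {a : A | ∀ i, D i a = 0} = (Algebra.adjoin k {f} : Subalgebra k A))
    (E E' : Derivation k A A)
    (q q' : Polynomial k) (hq : q ≠ 0) (hq' : q' ≠ 0)
    (g g' : Fin n → Polynomial k)
    (hE : ∀ x : A, Polynomial.aeval f q * E x = ∑ i, Polynomial.aeval f (g i) * D i x)
    (hE' : ∀ x : A, Polynomial.aeval f q' * E' x = ∑ i, Polynomial.aeval f (g' i) * D i x) :
    E.IsLocallyNilpotent ∧ ∀ x : A, E (E' x) = E' (E x) := by
  classical
  -- each D i kills every polynomial in f
  have hDadj : ∀ (i : Fin n) (p : Polynomial k), D i (Polynomial.aeval f p) = 0 := by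
    intro i p
    have hmem : Polynomial.aeval f p ∈ Algebra.adjoin k {f} := by
      rw [Algebra.adjoin_singleton_eq_range_aeval]
      exact ⟨p, rfl⟩
    have hmem' : Polynomial.aeval f p ∈ {a : A | ∀ i, D i a = 0} := by
      rw [hker]; exact hmem
    exact hmem' i
  have hfne : f ≠ 0 := by
    intro h; exact hf ⟨0, by simp [h]⟩
  -- f is transcendental over k, so q(f) ≠ 0
  have haeval_ne : ∀ p : Polynomial k, p ≠ 0 → Polynomial.aeval f p ≠ 0 := by
    intro p hp hcon
    have halg : IsAlgebraic k f := ⟨p, hp, hcon⟩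
    have hint : IsIntegral k f := halg.isIntegral
    have h0 : (minpoly k f).coeff 0 ≠ 0 := minpoly.coeff_zero_ne_zero hint hfne
    have haev : Polynomial.aeval f (minpoly k f) = 0 := minpoly.aeval k f
    have hsum : Polynomial.aeval f ((minpoly k f).divX) * f
        + algebraMap k A ((minpoly k f).coeff 0) = 0 := by
      rw [← haev]
      conv_rhs => rw [← Polynomial.divX_mul_X_add (minpoly k f)]
      simp
    have hunit : IsUnit f := by
      apply IsUnit.of_mul_eq_one
        (-(Polynomial.aeval f ((minpoly k f).divX)) * algebraMap k A (((minpoly k f).coeff 0)⁻¹))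
      have h2 : algebraMap k A ((minpoly k f).coeff 0)
          = -(Polynomial.aeval f ((minpoly k f).divX) * f) := by
        linear_combination hsum
      have h1 : f * (-(Polynomial.aeval f ((minpoly k f).divX))
          * algebraMap k A (((minpoly k f).coeff 0)⁻¹))
          = algebraMap k A ((minpoly k f).coeff 0)
            * algebraMap k A (((minpoly k f).coeff 0)⁻¹) := by
        rw [h2]; ring
      rw [h1, ← map_mul, mul_inv_cancel₀ h0, map_one]
    obtain ⟨c, hc⟩ := hunits f hunit
    exact hf ⟨c, hc⟩
  have hcne : Polynomial.aeval f q ≠ 0 := haeval_ne q hq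
  have hc'ne : Polynomial.aeval f q' ≠ 0 := haeval_ne q' hq'
  -- derivations commute with multiplication by polynomials in f
  have hDmul : ∀ (i : Fin n) (p : Polynomial k) (y : A),
      D i (Polynomial.aeval f p * y) = Polynomial.aeval f p * D i y := by
    intro i p y
    rw [Derivation.leibniz, hDadj i p, smul_zero, add_zero, smul_eq_mul]
  -- the linear endomorphisms
  set M : Fin n → Module.End k A :=
    fun i => Polynomial.aeval f (g i) • ((D i : A →ₗ[k] A)) with hM
  set L : Module.End k A := ∑ i, M i with hL
  set L' : Module.End k A :=
    ∑ i, Polynomial.aeval f (g' i) • ((D i : A →ₗ[k] A)) with hL'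
  have hLapp : ∀ x : A, L x = ∑ i, Polynomial.aeval f (g i) * D i x := by
    intro x
    simp [hL, hM, LinearMap.sum_apply, LinearMap.smul_apply, smul_eq_mul]
  have hL'app : ∀ x : A, L' x = ∑ i, Polynomial.aeval f (g' i) * D i x := by
    intro x
    simp [hL', LinearMap.sum_apply, LinearMap.smul_apply, smul_eq_mul]
  have hLmul : ∀ (p : Polynomial k) (y : A),
      L (Polynomial.aeval f p * y) = Polynomial.aeval f p * L y := by
    intro p y
    rw [hLapp, hLapp, Finset.mul_sum]
    exact Finset.sum_congr rfl fun i _ => by rw [hDmul]; ring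
  have hL'mul : ∀ (p : Polynomial k) (y : A),
      L' (Polynomial.aeval f p * y) = Polynomial.aeval f p * L' y := by
    intro p y
    rw [hL'app, hL'app, Finset.mul_sum]
    exact Finset.sum_congr rfl fun i _ => by rw [hDmul]; ring
  have hLpowmul : ∀ (m : ℕ) (p : Polynomial k) (y : A),
      (L ^ m) (Polynomial.aeval f p * y) = Polynomial.aeval f p * (L ^ m) y := by
    intro m
    induction m with
    | zero => intro p y; simp
    | succ m ih =>
        intro p y
        rw [pow_succ, Module.End.mul_apply, hLmul, ih, ← Module.End.mul_apply, ← pow_succ]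
  -- the M i commute
  have hMapp : ∀ (i j : Fin n) (x : A), M i (M j x)
      = Polynomial.aeval f (g i) * (Polynomial.aeval f (g j) * D i (D j x)) := by
    intro i j x
    simp only [hM, LinearMap.smul_apply, smul_eq_mul, Derivation.coeFn_coe]
    rw [hDmul]
  have hMco : ∀ i j, Commute (M i) (M j) := by
    intro i j
    apply LinearMap.ext
    intro x
    rw [Module.End.mul_apply, Module.End.mul_apply, hMapp, hMapp, hcomm i j]
    ring
  -- each M i is pointwise locally nilpotent
  have hMpow : ∀ (i : Fin n) (m : ℕ) (x : A),
      (M i ^ m) x = Polynomial.aeval f (g i ^ m) * (fun y => D i y)^[m] x := by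
    intro i m
    induction m with
    | zero => intro x; simp
    | succ m ih =>
        intro x
        rw [pow_succ', Module.End.mul_apply, ih x]
        simp only [hM, LinearMap.smul_apply, smul_eq_mul, Derivation.coeFn_coe]
        rw [hDmul i (g i ^ m)]
        simp only [Function.iterate_succ_apply']
        rw [map_pow, map_pow]
        ring
  have hMln : ∀ i, ∀ x : A, ∃ m, (M i ^ m) x = 0 := by
    intro i x
    obtain ⟨m, _, hm⟩ := hLN i x
    exact ⟨m, by rw [hMpow, hm, mul_zero]⟩
  have hLln : ∀ x : A, ∃ m, (L ^ m) x = 0 := by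
    rw [hL]
    exact ptLN_sum Finset.univ M hMco hMln
  -- the key identity  q(f)^m · E^[m] x = L^m x
  have hkey : ∀ (m : ℕ) (x : A),
      Polynomial.aeval f q ^ m * (fun y => E y)^[m] x = (L ^ m) x := by
    intro m
    induction m with
    | zero => intro x; simp
    | succ m ih =>
        intro x
        simp only [Function.iterate_succ_apply]
        rw [pow_succ', mul_assoc, ih (E x), ← hLpowmul m q (E x), hE x, ← hLapp,
          ← Module.End.mul_apply, ← pow_succ]
  constructor
  · -- local nilpotence of E
    intro a
    obtain ⟨m, hm⟩ := hLln a
    refine ⟨m + 1, Nat.le_add_left 1 m, ?_⟩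
    have h1 : (L ^ (m + 1)) a = 0 := by
      rw [pow_succ, Module.End.mul_apply, ← Module.End.mul_apply, ← pow_succ]
      exact ptLN_pow_ge hm (Nat.le_succ m)
    have h2 : Polynomial.aeval f q ^ (m + 1) * (fun y => E y)^[m + 1] a = 0 := by
      rw [hkey, h1]
    rcases mul_eq_zero.mp h2 with h | h
    · exact absurd h (pow_ne_zero _ hcne)
    · exact h
  · -- E and E' commute
    intro x
    have h1 : Polynomial.aeval f q' * (Polynomial.aeval f q * E (E' x)) = L (L' x) := by
      rw [hE (E' x), ← hLapp, ← hLmul q' (E' x), hE' x, ← hL'app]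
    have h2 : Polynomial.aeval f q * (Polynomial.aeval f q' * E' (E x)) = L' (L x) := by
      rw [hE' (E x), ← hL'app, ← hL'mul q (E x), hE x, ← hLapp]
    have h3 : L (L' x) = L' (L x) := by
      rw [hLapp (L' x), hL'app (L x)]
      have e1 : ∀ i : Fin n, D i (L' x) = ∑ j, Polynomial.aeval f (g' j) * D i (D j x) := by
        intro i
        rw [hL'app, map_sum]
        exact Finset.sum_congr rfl fun j _ => hDmul i (g' j) (D j x)
      have e2 : ∀ i : Fin n, D i (L x) = ∑ j, Polynomial.aeval f (g j) * D i (D j x) := by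
        intro i
        rw [hLapp, map_sum]
        exact Finset.sum_congr rfl fun j _ => hDmul i (g j) (D j x)
      simp only [e1, e2, Finset.mul_sum]
      rw [Finset.sum_comm]
      refine Finset.sum_congr rfl fun i _ => Finset.sum_congr rfl fun j _ => ?_
      rw [hcomm j i]
      ring
    have h4 : Polynomial.aeval f q' * Polynomial.aeval f q * E (E' x)
        = Polynomial.aeval f q' * Polynomial.aeval f q * E' (E x) := by
      rw [mul_assoc, h1, h3, ← h2]
      ring
    exact mul_left_cancel₀ (mul_ne_zero hc'ne hcne) h4
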